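/- Evasion of two consecutive blocked nodes: for every N ≥ 1 and every blocked set B = {n_1, n_2} with 1 ≤ n_1 and n_2 = n_1 + 1 ≤ 4^N−2 (two consecutive blocked nodes, which are necessarily edge connected and form a 1×2 domino hole), an evasion tour exists. -/

import Mathlib

/-- The `N`-th order approximated Hilbert curve, mapping indices `{0,...,4^N-1}`
to nodes of the grid `{0,...,2^N-1} × {0,...,2^N-1} ⊆ ℤ × ℤ`. -/
def hilbert : ℕ → ℕ → ℤ × ℤ
  | 0, _ => (0, 0)
  | 1, i =>
    if i = 0 then (0, 0)
    else if i = 1 then (0, 1)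
    else if i = 2 then (1, 1)
    else (1, 0)
  | N + 2, i =>
    let q := i / 4 ^ (N + 1)
    let s : ℤ := 2 ^ (N + 1)
    let p := hilbert (N + 1) (i % 4 ^ (N + 1))
    if q = 0 then (p.2, p.1)
    else if q = 1 then (p.1, p.2 + s)
    else if q = 2 then (p.1 + s, p.2 + s)
    else (2 * s - 1 - p.2, s - 1 - p.1)

/-- Euclidean distance between two points of `ℤ × ℤ`. -/
noncomputable def euclDist (a b : ℤ × ℤ) : ℝ :=
  Real.sqrt (((a.1 - b.1 : ℤ) : ℝ) ^ 2 + ((a.2 - b.2 : ℤ) : ℝ) ^ 2)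

/-- Two points of `ℤ × ℤ` are edge connected if their Euclidean distance equals 1. -/
def EdgeConnected (a b : ℤ × ℤ) : Prop := euclDist a b = 1

/-- Two points of `ℤ × ℤ` are vertex connected if both coordinates differ by exactly 1. -/
def VertexConnected (a b : ℤ × ℤ) : Prop := |a.1 - b.1| = 1 ∧ |a.2 - b.2| = 1

/-- Membership in the grid `{0,...,2^N-1} × {0,...,2^N-1}`. -/
def InGrid (N : ℕ) (p : ℤ × ℤ) : Prop :=
  0 ≤ p.1 ∧ p.1 ≤ 2 ^ N - 1 ∧ 0 ≤ p.2 ∧ p.2 ≤ 2 ^ N - 1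

/-- The closed segment from `u` to `v` (centres of cells, viewed in `ℝ²`) is disjoint
from the open unit cell centred at `c`. -/
def SegAvoidsCell (u v c : ℤ × ℤ) : Prop :=
  ∀ t : ℝ, t ∈ Set.Icc (0 : ℝ) 1 →
    ¬ (|(1 - t) * (u.1 : ℝ) + t * (v.1 : ℝ) - (c.1 : ℝ)| < 1 / 2 ∧
       |(1 - t) * (u.2 : ℝ) + t * (v.2 : ℝ) - (c.2 : ℝ)| < 1 / 2)

/-- An evasion tour for the blocked index set `B` on the `N`-th order Hilbert grid:
a sequence of waypoints `w 0, ..., w m` in the grid, starting at the entry node,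
ending at the exit node, avoiding all blocked nodes, covering every unblocked grid
point, and whose straight-line segments avoid the interiors of all blocked cells. -/
def IsEvasionTour (N : ℕ) (B : Finset ℕ) (m : ℕ) (w : ℕ → ℤ × ℤ) : Prop :=
  w 0 = hilbert N 0 ∧
  w m = hilbert N (4 ^ N - 1) ∧
  (∀ j ≤ m, InGrid N (w j)) ∧
  (∀ j ≤ m, ∀ b ∈ B, w j ≠ hilbert N b) ∧
  (∀ p : ℤ × ℤ, InGrid N p → (∀ b ∈ B, p ≠ hilbert N b) → ∃ j ≤ m, w j = p) ∧
  (∀ j < m, ∀ b ∈ B, SegAvoidsCell (w j) (w (j + 1)) (hilbert N b))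


lemma hilbert_zero : ∀ N, hilbert N 0 = (0, 0)
  | 0 => rfl
  | 1 => rfl
  | (N+2) => by
    have h := hilbert_zero (N+1)
    simp [hilbert, Nat.zero_div, Nat.zero_mod, h]

lemma hilbert_last : ∀ N, hilbert N (4 ^ N - 1) = (2 ^ N - 1, 0)
  | 0 => by norm_num [hilbert]
  | 1 => by norm_num [hilbert]
  | (N+2) => by
    have h := hilbert_last (N+1)
    have hM : 0 < 4 ^ (N+1) := Nat.pow_pos (by norm_num)
    have e : 4 ^ (N+2) - 1 = 4 ^ (N+1) * 3 + (4 ^ (N+1) - 1) := by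
      have : 4 ^ (N+2) = 4 * 4 ^ (N+1) := by ring
      omega
    have hdiv : (4 ^ (N+2) - 1) / 4 ^ (N+1) = 3 := by
      rw [e, Nat.mul_add_div hM, Nat.div_eq_of_lt (by omega)]
    have hmod : (4 ^ (N+2) - 1) % 4 ^ (N+1) = 4 ^ (N+1) - 1 := by
      rw [e, Nat.mul_add_mod, Nat.mod_eq_of_lt (by omega)]
    simp only [hilbert, hdiv, hmod, h]
    norm_num
    ring

def adj (u v : ℤ × ℤ) : Prop :=
  ((u.1 - v.1 = 1 ∨ v.1 - u.1 = 1) ∧ u.2 = v.2) ∨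
  (u.1 = v.1 ∧ (u.2 - v.2 = 1 ∨ v.2 - u.2 = 1))

lemma quad (N i : ℕ) (hi : i < 4 ^ (N+2)) :
    ∃ q r, q < 4 ∧ r < 4 ^ (N+1) ∧ i = 4 ^ (N+1) * q + r ∧
      i / 4 ^ (N+1) = q ∧ i % 4 ^ (N+1) = r := by
  have hM : 0 < 4 ^ (N+1) := Nat.pow_pos (by norm_num)
  have h4 : 4 ^ (N+2) = 4 * 4 ^ (N+1) := by ring
  refine ⟨i / 4 ^ (N+1), i % 4 ^ (N+1), ?_, Nat.mod_lt _ hM, (Nat.div_add_mod i _).symm, rfl, rfl⟩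
  have := Nat.div_add_mod i (4 ^ (N+1))
  have := Nat.mod_lt i hM
  by_contra hc
  push_neg at hc
  have : 4 * 4 ^ (N+1) ≤ 4 ^ (N+1) * (i / 4 ^ (N+1)) := by
    calc 4 * 4 ^ (N+1) = 4 ^ (N+1) * 4 := by ring
    _ ≤ _ := Nat.mul_le_mul_left _ hc
  omega

lemma hilbert_mem : ∀ N, ∀ i < 4 ^ N, InGrid N (hilbert N i)
  | 0 => by intro i hi; interval_cases i; simp [hilbert, InGrid]
  | 1 => by intro i hi; interval_cases i <;> norm_num [hilbert, InGrid]
  | (N+2) => by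
    intro i hi
    obtain ⟨q, r, hq, hr, hiqr, hdiv, hmod⟩ := quad N i hi
    have hp := hilbert_mem (N+1) r hr
    unfold InGrid at hp ⊢
    have hs : (2:ℤ) ^ (N+2) = 2 * 2 ^ (N+1) := by ring
    have hs1 : (1:ℤ) ≤ 2 ^ (N+1) := one_le_pow₀ (by norm_num)
    interval_cases q <;> simp only [hilbert, hdiv, hmod] <;> norm_num <;> omega

lemma hilbert_adj : ∀ N, ∀ i, i + 1 < 4 ^ N → adj (hilbert N i) (hilbert N (i+1))
  | 0 => by intro i hi; simp at hi
  | 1 => by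
    intro i hi
    have hi2 : i ≤ 2 := by norm_num at hi; omega
    interval_cases i <;> norm_num [hilbert, adj]
  | (N+2) => by
    intro i hi
    obtain ⟨q, r, hq, hr, hiqr, hdiv, hmod⟩ := quad N i (by omega)
    have hM : 0 < 4 ^ (N+1) := Nat.pow_pos (by norm_num)
    have h4 : 4 ^ (N+2) = 4 ^ (N+1) * 4 := by ring
    by_cases hb : r + 1 < 4 ^ (N+1)
    · have e : i + 1 = 4 ^ (N+1) * q + (r+1) := by omega
      have hdiv' : (i+1) / 4 ^ (N+1) = q := by
        rw [e, Nat.mul_add_div hM, Nat.div_eq_of_lt hb]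
        omega
      have hmod' : (i+1) % 4 ^ (N+1) = r + 1 := by
        rw [e, Nat.mul_add_mod, Nat.mod_eq_of_lt hb]
      have IH := hilbert_adj (N+1) r hb
      unfold adj at IH ⊢
      interval_cases q <;> simp only [hilbert, hdiv, hmod, hdiv', hmod'] <;> norm_num <;> omega
    · have hre : r = 4 ^ (N+1) - 1 := by omega
      have hq3 : q < 3 := by interval_cases q <;> omega
      have e : i + 1 = 4 ^ (N+1) * (q + 1) := by interval_cases q <;> omega
      have hdiv' : (i+1) / 4 ^ (N+1) = q + 1 := by
        rw [e, Nat.mul_div_cancel_left _ hM]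
      have hmod' : (i+1) % 4 ^ (N+1) = 0 := by
        rw [e, Nat.mul_mod_right]
      have hL : hilbert (N+1) (i % 4 ^ (N+1)) = (2 ^ (N+1) - 1, 0) := by
        rw [hmod, hre, hilbert_last]
      have hZ : hilbert (N+1) 0 = (0, 0) := hilbert_zero _
      have hs1 : (1:ℤ) ≤ 2 ^ (N+1) := one_le_pow₀ (by norm_num)
      unfold adj
      interval_cases q <;> simp only [hilbert, hdiv, hdiv', hmod', hL, hZ] <;> norm_num <;> omega

lemma hilbert_inj : ∀ N, ∀ i < 4 ^ N, ∀ j < 4 ^ N, hilbert N i = hilbert N j → i = j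
  | 0 => by intro i hi j hj _; omega
  | 1 => by
    intro i hi j hj hEq
    have hi2 : i ≤ 3 := by norm_num at hi; omega
    have hj2 : j ≤ 3 := by norm_num at hj; omega
    interval_cases i <;> interval_cases j <;> simp_all [hilbert, Prod.ext_iff]
  | (N+2) => by
    intro i hi j hj hEq
    obtain ⟨q, r, hq, hr, hiqr, hdiv, hmod⟩ := quad N i hi
    obtain ⟨q', r', hq', hr', hjqr, hdiv', hmod'⟩ := quad N j hj
    have hpi := hilbert_mem (N+1) r hr
    have hpj := hilbert_mem (N+1) r' hr'
    unfold InGrid at hpi hpj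
    have hs : (2:ℤ) ^ (N+2) = 2 * 2 ^ (N+1) := by ring
    have hs1 : (1:ℤ) ≤ 2 ^ (N+1) := one_le_pow₀ (by norm_num)
    interval_cases q <;> interval_cases q' <;>
      simp only [hilbert, hdiv, hmod, hdiv', hmod'] at hEq <;> norm_num at hEq <;>
      obtain ⟨hE1, hE2⟩ := hEq <;>
      first
        | (exfalso; omega)
        | (have hrr : r = r' :=
            hilbert_inj (N+1) r hr r' hr' (Prod.ext_iff.mpr ⟨by omega, by omega⟩)
           omega)

def Free (N : ℕ) (b c p : ℤ × ℤ) : Prop := InGrid N p ∧ p ≠ b ∧ p ≠ c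

def Step (N : ℕ) (b c : ℤ × ℤ) (u v : ℤ × ℤ) : Prop :=
  Free N b c u ∧ Free N b c v ∧ adj u v

lemma free_iff (N : ℕ) (bx by' cx cy x y : ℤ) :
    Free N (bx, by') (cx, cy) (x, y) ↔
      0 ≤ x ∧ x ≤ 2 ^ N - 1 ∧ 0 ≤ y ∧ y ≤ 2 ^ N - 1 ∧
        ¬(x = bx ∧ y = by') ∧ ¬(x = cx ∧ y = cy) := by
  simp [Free, InGrid, Prod.ext_iff]; tauto

lemma adj_mk (x y x' y' : ℤ) :
    adj (x, y) (x', y') ↔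
      ((x - x' = 1 ∨ x' - x = 1) ∧ y = y') ∨ (x = x' ∧ (y - y' = 1 ∨ y' - y = 1)) := Iff.rfl

lemma reach_head' {N : ℕ} {b c u v w : ℤ × ℤ} (hu : Free N b c u) (hv : Free N b c v)
    (ha : adj u v) (h : Relation.ReflTransGen (Step N b c) v w) :
    Relation.ReflTransGen (Step N b c) u w :=
  Relation.ReflTransGen.head ⟨hu, hv, ha⟩ h

set_option maxHeartbeats 2000000 in
lemma reach_origin (N : ℕ) (bx by' cx cy : ℤ) (hS : (4:ℤ) ≤ 2 ^ N)
    (hadj : adj (bx, by') (cx, cy))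
    (hbg : InGrid N (bx, by')) (hcg : InGrid N (cx, cy))
    (hb0 : ¬(bx = 0 ∧ by' = 0)) (hc0 : ¬(cx = 0 ∧ cy = 0)) :
    ∀ u, Free N (bx, by') (cx, cy) u →
      Relation.ReflTransGen (Step N (bx, by') (cx, cy)) u ((0:ℤ), (0:ℤ)) := by
  rw [adj_mk] at hadj
  obtain ⟨hbg1, hbg2, hbg3, hbg4⟩ := hbg
  obtain ⟨hcg1, hcg2, hcg3, hcg4⟩ := hcg
  simp only at hbg1 hbg2 hbg3 hbg4 hcg1 hcg2 hcg3 hcg4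
  suffices H : ∀ n : ℕ, ∀ x y : ℤ, Free N (bx, by') (cx, cy) (x, y) → (x + y).toNat = n →
      Relation.ReflTransGen (Step N (bx, by') (cx, cy)) (x, y) ((0:ℤ), (0:ℤ)) by
    intro u hu
    obtain ⟨x, y⟩ := u
    exact H _ x y hu rfl
  intro n
  induction n using Nat.strong_induction_on with
  | _ n IH =>
  intro x y hu hn
  obtain ⟨hx0, hx1, hy0, hy1, hub, huc⟩ := (free_iff N bx by' cx cy x y).mp hu
  by_cases h00 : x = 0 ∧ y = 0
  · rw [h00.1, h00.2]
  by_cases hL : 1 ≤ x ∧ ¬(x - 1 = bx ∧ y = by') ∧ ¬(x - 1 = cx ∧ y = cy)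
  · have F1 : Free N (bx, by') (cx, cy) (x - 1, y) := by rw [free_iff]; omega
    exact reach_head' hu F1 (by rw [adj_mk]; omega) (IH (x - 1 + y).toNat (by omega) _ _ F1 rfl)
  by_cases hD : 1 ≤ y ∧ ¬(x = bx ∧ y - 1 = by') ∧ ¬(x = cx ∧ y - 1 = cy)
  · have F1 : Free N (bx, by') (cx, cy) (x, y - 1) := by rw [free_iff]; omega
    exact reach_head' hu F1 (by rw [adj_mk]; omega) (IH (x + (y - 1)).toNat (by omega) _ _ F1 rfl)
  have hcase : (1 ≤ x ∧ 1 ≤ y) ∨ (1 ≤ x ∧ y = 0) ∨ (x = 0 ∧ 1 ≤ y) := by omega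
  rcases hcase with ⟨hx, hy⟩ | ⟨hx, hy⟩ | ⟨hx, hy⟩
  · exfalso; omega
  · have hconf : ((bx = x - 1 ∧ by' = 0) ∧ ((cx = x - 2 ∧ cy = 0) ∨ (cx = x - 1 ∧ cy = 1))) ∨
        ((cx = x - 1 ∧ cy = 0) ∧ ((bx = x - 2 ∧ by' = 0) ∨ (bx = x - 1 ∧ by' = 1))) := by
      omega
    rcases hconf with ⟨⟨e1, e2⟩, ⟨f1, f2⟩ | ⟨f1, f2⟩⟩ | ⟨⟨e1, e2⟩, ⟨f1, f2⟩ | ⟨f1, f2⟩⟩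
    · have F1 : Free N (bx, by') (cx, cy) (x, 1) := by rw [free_iff]; omega
      have F2 : Free N (bx, by') (cx, cy) (x-1, 1) := by rw [free_iff]; omega
      have F3 : Free N (bx, by') (cx, cy) (x-2, 1) := by rw [free_iff]; omega
      have F4 : Free N (bx, by') (cx, cy) (x-3, 1) := by rw [free_iff]; omega
      have F5 : Free N (bx, by') (cx, cy) (x-3, 0) := by rw [free_iff]; omega
      exact reach_head' hu F1 (by rw [adj_mk]; omega) (reach_head' F1 F2 (by rw [adj_mk]; omega) (reach_head' F2 F3 (by rw [adj_mk]; omega) (reach_head' F3 F4 (by rw [adj_mk]; omega) (reach_head' F4 F5 (by rw [adj_mk]; omega) (IH (x-3 + (0)).toNat (by omega) _ _ F5 rfl)))))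
    · have F1 : Free N (bx, by') (cx, cy) (x, 1) := by rw [free_iff]; omega
      have F2 : Free N (bx, by') (cx, cy) (x, 2) := by rw [free_iff]; omega
      have F3 : Free N (bx, by') (cx, cy) (x-1, 2) := by rw [free_iff]; omega
      have F4 : Free N (bx, by') (cx, cy) (x-2, 2) := by rw [free_iff]; omega
      have F5 : Free N (bx, by') (cx, cy) (x-2, 1) := by rw [free_iff]; omega
      have F6 : Free N (bx, by') (cx, cy) (x-2, 0) := by rw [free_iff]; omega
      exact reach_head' hu F1 (by rw [adj_mk]; omega) (reach_head' F1 F2 (by rw [adj_mk]; omega) (reach_head' F2 F3 (by rw [adj_mk]; omega) (reach_head' F3 F4 (by rw [adj_mk]; omega) (reach_head' F4 F5 (by rw [adj_mk]; omega) (reach_head' F5 F6 (by rw [adj_mk]; omega) (IH (x-2 + (0)).toNat (by omega) _ _ F6 rfl))))))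
    · have F1 : Free N (bx, by') (cx, cy) (x, 1) := by rw [free_iff]; omega
      have F2 : Free N (bx, by') (cx, cy) (x-1, 1) := by rw [free_iff]; omega
      have F3 : Free N (bx, by') (cx, cy) (x-2, 1) := by rw [free_iff]; omega
      have F4 : Free N (bx, by') (cx, cy) (x-3, 1) := by rw [free_iff]; omega
      have F5 : Free N (bx, by') (cx, cy) (x-3, 0) := by rw [free_iff]; omega
      exact reach_head' hu F1 (by rw [adj_mk]; omega) (reach_head' F1 F2 (by rw [adj_mk]; omega) (reach_head' F2 F3 (by rw [adj_mk]; omega) (reach_head' F3 F4 (by rw [adj_mk]; omega) (reach_head' F4 F5 (by rw [adj_mk]; omega) (IH (x-3 + (0)).toNat (by omega) _ _ F5 rfl)))))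
    · have F1 : Free N (bx, by') (cx, cy) (x, 1) := by rw [free_iff]; omega
      have F2 : Free N (bx, by') (cx, cy) (x, 2) := by rw [free_iff]; omega
      have F3 : Free N (bx, by') (cx, cy) (x-1, 2) := by rw [free_iff]; omega
      have F4 : Free N (bx, by') (cx, cy) (x-2, 2) := by rw [free_iff]; omega
      have F5 : Free N (bx, by') (cx, cy) (x-2, 1) := by rw [free_iff]; omega
      have F6 : Free N (bx, by') (cx, cy) (x-2, 0) := by rw [free_iff]; omega
      exact reach_head' hu F1 (by rw [adj_mk]; omega) (reach_head' F1 F2 (by rw [adj_mk]; omega) (reach_head' F2 F3 (by rw [adj_mk]; omega) (reach_head' F3 F4 (by rw [adj_mk]; omega) (reach_head' F4 F5 (by rw [adj_mk]; omega) (reach_head' F5 F6 (by rw [adj_mk]; omega) (IH (x-2 + (0)).toNat (by omega) _ _ F6 rfl))))))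
  · have hconf : ((bx = 0 ∧ by' = y - 1) ∧ ((cx = 0 ∧ cy = y - 2) ∨ (cx = 1 ∧ cy = y - 1))) ∨
        ((cx = 0 ∧ cy = y - 1) ∧ ((bx = 0 ∧ by' = y - 2) ∨ (bx = 1 ∧ by' = y - 1))) := by
      omega
    rcases hconf with ⟨⟨e1, e2⟩, ⟨f1, f2⟩ | ⟨f1, f2⟩⟩ | ⟨⟨e1, e2⟩, ⟨f1, f2⟩ | ⟨f1, f2⟩⟩
    · have F1 : Free N (bx, by') (cx, cy) (1, y) := by rw [free_iff]; omega
      have F2 : Free N (bx, by') (cx, cy) (1, y-1) := by rw [free_iff]; omega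
      have F3 : Free N (bx, by') (cx, cy) (1, y-2) := by rw [free_iff]; omega
      have F4 : Free N (bx, by') (cx, cy) (1, y-3) := by rw [free_iff]; omega
      have F5 : Free N (bx, by') (cx, cy) (0, y-3) := by rw [free_iff]; omega
      exact reach_head' hu F1 (by rw [adj_mk]; omega) (reach_head' F1 F2 (by rw [adj_mk]; omega) (reach_head' F2 F3 (by rw [adj_mk]; omega) (reach_head' F3 F4 (by rw [adj_mk]; omega) (reach_head' F4 F5 (by rw [adj_mk]; omega) (IH (0 + (y-3)).toNat (by omega) _ _ F5 rfl)))))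
    · have F1 : Free N (bx, by') (cx, cy) (1, y) := by rw [free_iff]; omega
      have F2 : Free N (bx, by') (cx, cy) (2, y) := by rw [free_iff]; omega
      have F3 : Free N (bx, by') (cx, cy) (2, y-1) := by rw [free_iff]; omega
      have F4 : Free N (bx, by') (cx, cy) (2, y-2) := by rw [free_iff]; omega
      have F5 : Free N (bx, by') (cx, cy) (1, y-2) := by rw [free_iff]; omega
      have F6 : Free N (bx, by') (cx, cy) (0, y-2) := by rw [free_iff]; omega
      exact reach_head' hu F1 (by rw [adj_mk]; omega) (reach_head' F1 F2 (by rw [adj_mk]; omega) (reach_head' F2 F3 (by rw [adj_mk]; omega) (reach_head' F3 F4 (by rw [adj_mk]; omega) (reach_head' F4 F5 (by rw [adj_mk]; omega) (reach_head' F5 F6 (by rw [adj_mk]; omega) (IH (0 + (y-2)).toNat (by omega) _ _ F6 rfl))))))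
    · have F1 : Free N (bx, by') (cx, cy) (1, y) := by rw [free_iff]; omega
      have F2 : Free N (bx, by') (cx, cy) (1, y-1) := by rw [free_iff]; omega
      have F3 : Free N (bx, by') (cx, cy) (1, y-2) := by rw [free_iff]; omega
      have F4 : Free N (bx, by') (cx, cy) (1, y-3) := by rw [free_iff]; omega
      have F5 : Free N (bx, by') (cx, cy) (0, y-3) := by rw [free_iff]; omega
      exact reach_head' hu F1 (by rw [adj_mk]; omega) (reach_head' F1 F2 (by rw [adj_mk]; omega) (reach_head' F2 F3 (by rw [adj_mk]; omega) (reach_head' F3 F4 (by rw [adj_mk]; omega) (reach_head' F4 F5 (by rw [adj_mk]; omega) (IH (0 + (y-3)).toNat (by omega) _ _ F5 rfl)))))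
    · have F1 : Free N (bx, by') (cx, cy) (1, y) := by rw [free_iff]; omega
      have F2 : Free N (bx, by') (cx, cy) (2, y) := by rw [free_iff]; omega
      have F3 : Free N (bx, by') (cx, cy) (2, y-1) := by rw [free_iff]; omega
      have F4 : Free N (bx, by') (cx, cy) (2, y-2) := by rw [free_iff]; omega
      have F5 : Free N (bx, by') (cx, cy) (1, y-2) := by rw [free_iff]; omega
      have F6 : Free N (bx, by') (cx, cy) (0, y-2) := by rw [free_iff]; omega
      exact reach_head' hu F1 (by rw [adj_mk]; omega) (reach_head' F1 F2 (by rw [adj_mk]; omega) (reach_head' F2 F3 (by rw [adj_mk]; omega) (reach_head' F3 F4 (by rw [adj_mk]; omega) (reach_head' F4 F5 (by rw [adj_mk]; omega) (reach_head' F5 F6 (by rw [adj_mk]; omega) (IH (0 + (y-2)).toNat (by omega) _ _ F6 rfl))))))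

lemma step_symm {N : ℕ} {b c : ℤ × ℤ} : Symmetric (Step N b c) := by
  rintro u v ⟨h1, h2, h3⟩
  refine ⟨h2, h1, ?_⟩
  unfold adj at h3 ⊢
  tauto

lemma reach_origin' (N : ℕ) (b c : ℤ × ℤ) (hS : (4:ℤ) ≤ 2 ^ N)
    (hadj : adj b c) (hbg : InGrid N b) (hcg : InGrid N c)
    (hb0 : b ≠ ((0:ℤ), (0:ℤ))) (hc0 : c ≠ ((0:ℤ), (0:ℤ))) :
    ∀ u, Free N b c u → Relation.ReflTransGen (Step N b c) u ((0:ℤ), (0:ℤ)) := by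
  obtain ⟨bx, by'⟩ := b
  obtain ⟨cx, cy⟩ := c
  exact reach_origin N bx by' cx cy hS hadj hbg hcg
    (by simpa [Prod.ext_iff] using hb0) (by simpa [Prod.ext_iff] using hc0)

lemma reach_all (N : ℕ) (b c : ℤ × ℤ) (hS : (4:ℤ) ≤ 2 ^ N)
    (hadj : adj b c) (hbg : InGrid N b) (hcg : InGrid N c)
    (hb0 : b ≠ ((0:ℤ), (0:ℤ))) (hc0 : c ≠ ((0:ℤ), (0:ℤ)))
    (u v : ℤ × ℤ) (hu : Free N b c u) (hv : Free N b c v) :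
    Relation.ReflTransGen (Step N b c) u v :=
  (reach_origin' N b c hS hadj hbg hcg hb0 hc0 u hu).trans
    ((@Relation.ReflTransGen.stdSymm _ _ ⟨step_symm⟩).symm _ _
      (reach_origin' N b c hS hadj hbg hcg hb0 hc0 v hv))

/-- surjectivity of `hilbert N` onto the grid -/
lemma hilbert_surj (N : ℕ) (p : ℤ × ℤ) (hp : InGrid N p) : ∃ i < 4 ^ N, hilbert N i = p := by
  classical
  set G : Finset (ℤ × ℤ) := Finset.Icc (0:ℤ) (2 ^ N - 1) ×ˢ Finset.Icc (0:ℤ) (2 ^ N - 1) with hG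
  set F : Finset (ℤ × ℤ) := (Finset.range (4 ^ N)).image (hilbert N) with hF
  have hFG : F ⊆ G := by
    intro q hq
    rw [hF, Finset.mem_image] at hq
    obtain ⟨i, hi, rfl⟩ := hq
    rw [Finset.mem_range] at hi
    have := hilbert_mem N i hi
    obtain ⟨h1, h2, h3, h4⟩ := this
    simp [hG, Finset.mem_product, Finset.mem_Icc]
    omega
  have hcardG : G.card = 4 ^ N := by
    rw [hG, Finset.card_product, Int.card_Icc]
    have : ((2:ℤ) ^ N - 1 + 1 - 0) = ((2 ^ N : ℕ) : ℤ) := by push_cast; ring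
    rw [this, Int.toNat_natCast]
    rw [← Nat.mul_pow]
  have hcardF : F.card = 4 ^ N := by
    rw [hF, Finset.card_image_of_injOn, Finset.card_range]
    intro i hi j hj hij
    rw [Finset.mem_coe, Finset.mem_range] at hi hj
    exact hilbert_inj N i hi j hj hij
  have hEq : F = G := Finset.eq_of_subset_of_card_le hFG (by omega)
  have hpG : p ∈ G := by
    obtain ⟨h1, h2, h3, h4⟩ := hp
    simp [hG, Finset.mem_product, Finset.mem_Icc]
    omega
  rw [← hEq, hF, Finset.mem_image] at hpG
  obtain ⟨i, hi, hip⟩ := hpG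
  rw [Finset.mem_range] at hi
  exact ⟨i, hi, hip⟩

/-- a segment of consecutive hilbert nodes as a list -/
def seg (f : ℕ → ℤ × ℤ) : ℕ → ℕ → List (ℤ × ℤ)
  | _, 0 => []
  | a, (m+1) => f a :: seg f (a+1) m

lemma seg_mem (f : ℕ → ℤ × ℤ) : ∀ a m p, p ∈ seg f a m ↔ ∃ k, k < m ∧ p = f (a + k) := by
  intro a m
  induction m generalizing a with
  | zero => simp [seg]
  | succ m IH =>
    intro p
    simp only [seg, List.mem_cons, IH (a+1)]
    constructor
    · rintro (rfl | ⟨k, hk, rfl⟩)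
      · exact ⟨0, by omega, by simp⟩
      · exact ⟨k + 1, by omega, by rw [show a + (k+1) = a + 1 + k by omega]⟩
    · rintro ⟨k, hk, rfl⟩
      rcases Nat.eq_zero_or_pos k with rfl | hk0
      · left; simp
      · right; exact ⟨k - 1, by omega, by rw [show a + 1 + (k-1) = a + k by omega]⟩

lemma seg_chain' {R : ℤ × ℤ → ℤ × ℤ → Prop} (f : ℕ → ℤ × ℤ) :
    ∀ a m, (∀ k, k + 1 < m → R (f (a + k)) (f (a + k + 1))) → List.Chain' R (seg f a m) := by
  intro a m
  induction m generalizing a with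
  | zero => intro _; simp [seg, List.Chain']
  | succ m IH =>
    intro h
    cases m with
    | zero => simp [seg, List.Chain']
    | succ m' =>
      rw [seg, seg]; show List.IsChain R _; rw [List.isChain_cons_cons]
      constructor
      · have := h 0 (by omega)
        simpa using this
      · rw [← seg]
        exact IH (a+1) (fun k hk => by
          have := h (k+1) (by omega)
          rw [show a + (k+1) = a + 1 + k by omega] at this
          exact this)

lemma seg_head? (f : ℕ → ℤ × ℤ) (a m : ℕ) (hm : 0 < m) : (seg f a m).head? = some (f a) := by
  cases m with
  | zero => omega
  | succ m => rfl

lemma seg_getLast? (f : ℕ → ℤ × ℤ) : ∀ a m, 0 < m → (seg f a m).getLast? = some (f (a + m - 1)) := by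
  intro a m
  induction m generalizing a with
  | zero => omega
  | succ m IH =>
    intro _
    cases m with
    | zero => simp [seg]
    | succ m' =>
      have h := IH (a+1) (by omega)
      have e : seg f (a+1) (m'+1) = f (a+1) :: seg f (a+2) m' := rfl
      rw [seg, e, List.getLast?_cons_cons, ← e, h]
      have : a + 1 + (m'+1) - 1 = a + (m'+1+1) - 1 := by omega
      rw [this]

lemma abs_cast_ge_one {a b : ℤ} (h : a ≠ b) : (1:ℝ) ≤ |(a:ℝ) - (b:ℝ)| := by
  have h1 : 1 ≤ |a - b| := Int.one_le_abs (sub_ne_zero.mpr h)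
  calc (1:ℝ) = ((1:ℤ):ℝ) := by norm_num
  _ ≤ ((|a-b| : ℤ) : ℝ) := by exact_mod_cast h1
  _ = |(a:ℝ) - b| := by rw [Int.cast_abs]; push_cast; ring_nf

-- coordinate-wise: given |a−b| ≤ 1 (ints), t∈[0,1], |(1-t)a+tb - c| < 1/2 and c ≠ a and c ≠ b: contradiction... only when |a-b|=1.
lemma coord_contra {a b c : ℤ} {t : ℝ} (hab : |a - b| ≤ 1) (ht0 : 0 ≤ t) (ht1 : t ≤ 1)
    (h : |(1-t)*(a:ℝ) + t*(b:ℝ) - (c:ℝ)| < 1/2) : c = a ∨ c = b := by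
  by_contra hc
  push_neg at hc
  obtain ⟨hca, hcb⟩ := hc
  have h1 : (1:ℝ) ≤ |(a:ℝ) - c| := abs_cast_ge_one (fun e => hca e.symm)
  have h2 : (1:ℝ) ≤ |(b:ℝ) - c| := abs_cast_ge_one (fun e => hcb e.symm)
  have hab' : |(a:ℝ) - b| ≤ 1 := by
    calc |(a:ℝ) - b| = ((|a-b| : ℤ) : ℝ) := by rw [Int.cast_abs]; push_cast; ring_nf
    _ ≤ 1 := by exact_mod_cast hab
  set x := (1-t)*(a:ℝ) + t*(b:ℝ) with hx
  have e1 : x - (a:ℝ) = t * ((b:ℝ) - a) := by rw [hx]; ring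
  have e2 : x - (b:ℝ) = (1-t) * ((a:ℝ) - b) := by rw [hx]; ring
  have hxa : |x - (a:ℝ)| ≤ t := by
    rw [e1, abs_mul, abs_of_nonneg ht0, abs_sub_comm]
    nlinarith [abs_nonneg ((a:ℝ)-b)]
  have hxb : |x - (b:ℝ)| ≤ 1 - t := by
    rw [e2, abs_mul, abs_of_nonneg (by linarith : (0:ℝ) ≤ 1 - t)]
    nlinarith [abs_nonneg ((a:ℝ)-b)]
  have t1 : |(a:ℝ) - c| ≤ |x - (a:ℝ)| + |x - c| := by
    have := abs_sub_le ((a:ℝ)) x (c:ℝ)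
    rw [abs_sub_comm (a:ℝ) x] at this; exact this
  have t2 : |(b:ℝ) - c| ≤ |x - (b:ℝ)| + |x - c| := by
    have := abs_sub_le ((b:ℝ)) x (c:ℝ)
    rw [abs_sub_comm (b:ℝ) x] at this; exact this
  linarith

lemma segAvoids_of_adj {u v c : ℤ × ℤ} (h : u = v ∨ adj u v) (hcu : c ≠ u) (hcv : c ≠ v) :
    SegAvoidsCell u v c := by
  rintro t ⟨ht0, ht1⟩ ⟨H1, H2⟩
  have hab1 : |u.1 - v.1| ≤ 1 := by
    rcases h with rfl | h <;> [simp; skip]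
    unfold adj at h; rw [abs_le]; rcases h with ⟨h1, _⟩ | ⟨h1, _⟩ <;> omega
  have hab2 : |u.2 - v.2| ≤ 1 := by
    rcases h with rfl | h <;> [simp; skip]
    unfold adj at h; rw [abs_le]; rcases h with ⟨_, h2⟩ | ⟨_, h2⟩ <;> omega
  have c1 := coord_contra hab1 ht0 ht1 H1
  have c2 := coord_contra hab2 ht0 ht1 H2
  simp only [Ne, Prod.ext_iff, not_and] at hcu hcv
  rcases h with rfl | h
  · omega
  · unfold adj at h
    rcases h with ⟨_, h2⟩ | ⟨h1, _⟩ <;> omega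

lemma chain_all_free {N : ℕ} {b c : ℤ × ℤ} :
    ∀ (l : List (ℤ × ℤ)) (x : ℤ × ℤ), Free N b c x → List.Chain (Step N b c) x l →
      ∀ p ∈ x :: l, Free N b c p := by
  intro l
  induction l with
  | nil => intro x hx _ p hp; simp at hp; rwa [hp]
  | cons y t IH =>
    intro x hx hch p hp
    change List.IsChain _ (x :: y :: t) at hch; rw [List.isChain_cons_cons] at hch
    rcases List.mem_cons.mp hp with rfl | hp'
    · exact hx
    · exact IH y hch.1.2.1 hch.2 p hp'

lemma tour_of_list (N : ℕ) (B : Finset ℕ) (L : List (ℤ × ℤ))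
    (hhead : L.head? = some (hilbert N 0))
    (hlast : L.getLast? = some (hilbert N (4 ^ N - 1)))
    (hmem : ∀ p ∈ L, InGrid N p ∧ ∀ b ∈ B, p ≠ hilbert N b)
    (hchain : List.Chain' (fun u v => u = v ∨ adj u v) L)
    (hcover : ∀ p, InGrid N p → (∀ b ∈ B, p ≠ hilbert N b) → p ∈ L) :
    ∃ m w, IsEvasionTour N B m w := by
  have hne : L ≠ [] := by
    intro h; rw [h] at hhead; simp at hhead
  have hlen : 0 < L.length := List.length_pos_iff.mpr hne
  have hget : ∀ j (h : j < L.length), L.getD j ((0:ℤ),(0:ℤ)) = L[j]'h :=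
    fun j h => List.getD_eq_getElem L _ h
  refine ⟨L.length - 1, fun j => L.getD j ((0:ℤ),(0:ℤ)), ?_, ?_, ?_, ?_, ?_, ?_⟩ <;> beta_reduce
  · rw [hget 0 hlen]
    rw [List.head?_eq_getElem?, List.getElem?_eq_getElem hlen] at hhead
    exact Option.some_injective _ hhead
  · rw [hget (L.length - 1) (by omega)]
    rw [List.getLast?_eq_getLast_of_ne_nil hne] at hlast
    rw [← List.getLast_eq_getElem hne]
    exact Option.some_injective _ hlast
  · intro j hj
    rw [hget j (by omega)]
    exact (hmem _ (List.getElem_mem _)).1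
  · intro j hj b hb
    rw [hget j (by omega)]
    exact (hmem _ (List.getElem_mem _)).2 b hb
  · intro p hp hpb
    obtain ⟨j, hj, hjp⟩ := List.mem_iff_getElem.mp (hcover p hp hpb)
    exact ⟨j, by omega, by rw [hget j hj]; exact hjp⟩
  · intro j hj b hb
    have hr := List.isChain_iff_getElem.mp hchain j (by omega)
    have h1 := (hmem _ (List.getElem_mem (by omega : j < L.length))).2 b hb
    have h2 := (hmem _ (List.getElem_mem (by omega : j + 1 < L.length))).2 b hb
    rw [hget j (by omega), hget (j+1) (by omega)]
    exact segAvoids_of_adj hr (fun e => h1 e.symm) (fun e => h2 e.symm)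

lemma seg_ne_nil (f : ℕ → ℤ × ℤ) (a m : ℕ) (hm : 0 < m) : seg f a m ≠ [] := by
  cases m with
  | zero => omega
  | succ m => simp [seg]

theorem hilbert_evade_two_consecutive_blocked (N n1 n2 : ℕ) (hN : 1 ≤ N)
    (h1 : 1 ≤ n1) (hn2 : n2 = n1 + 1) (h2 : n2 ≤ 4 ^ N - 2) :
    ∃ (m : ℕ) (w : ℕ → ℤ × ℤ), IsEvasionTour N {n1, n2} m w := by
  subst hn2
  have hK4 : 4 ≤ 4 ^ N := by
    calc 4 = 4 ^ 1 := by norm_num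
    _ ≤ 4 ^ N := Nat.pow_le_pow_right (by norm_num) hN
  have hadj : adj (hilbert N n1) (hilbert N (n1+1)) := hilbert_adj N n1 (by omega)
  have hbg : InGrid N (hilbert N n1) := hilbert_mem N n1 (by omega)
  have hcg : InGrid N (hilbert N (n1+1)) := hilbert_mem N (n1+1) (by omega)
  have hne : ∀ i j, i < 4^N → j < 4^N → i ≠ j → hilbert N i ≠ hilbert N j :=
    fun i j hi hj hij e => hij (hilbert_inj N i hi j hj e)
  have hfree : ∀ i, i < 4^N → i ≠ n1 → i ≠ n1+1 →
      Free N (hilbert N n1) (hilbert N (n1+1)) (hilbert N i) :=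
    fun i hi e1 e2 => ⟨hilbert_mem N i hi, hne i n1 hi (by omega) e1, hne i (n1+1) hi (by omega) e2⟩
  have hreach : Relation.ReflTransGen (Step N (hilbert N n1) (hilbert N (n1+1)))
      (hilbert N (n1-1)) (hilbert N (n1+2)) := by
    rcases Nat.lt_or_ge N 2 with hN2 | hN2
    · have hN1 : N = 1 := by omega
      subst hN1
      have hn11 : n1 = 1 := by norm_num at h2; omega
      subst hn11
      refine Relation.ReflTransGen.single
        ⟨hfree 0 (by norm_num) (by omega) (by omega), hfree 3 (by norm_num) (by omega) (by omega), ?_⟩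
      norm_num [hilbert, adj]
    · have hS : (4:ℤ) ≤ 2 ^ N := by
        calc (4:ℤ) = 2 ^ 2 := by norm_num
        _ ≤ 2 ^ N := pow_le_pow_right₀ (by norm_num) hN2
      have hz : hilbert N 0 = ((0:ℤ),(0:ℤ)) := hilbert_zero N
      refine reach_all N _ _ hS hadj hbg hcg ?_ ?_ _ _
        (hfree (n1-1) (by omega) (by omega) (by omega))
        (hfree (n1+2) (by omega) (by omega) (by omega))
      · rw [← hz]; exact hne n1 0 (by omega) (by omega) (by omega)
      · rw [← hz]; exact hne (n1+1) 0 (by omega) (by omega) (by omega)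
  obtain ⟨l, hl1, hl2⟩ := List.exists_isChain_cons_of_relationReflTransGen hreach
  have hconv : ∀ p, Free N (hilbert N n1) (hilbert N (n1+1)) p →
      InGrid N p ∧ ∀ b ∈ ({n1, n1+1} : Finset ℕ), p ≠ hilbert N b := by
    rintro p ⟨hg, ha, hb⟩
    refine ⟨hg, ?_⟩
    intro b hb'
    simp only [Finset.mem_insert, Finset.mem_singleton] at hb'
    rcases hb' with rfl | rfl
    exacts [ha, hb]
  have hmid : ∀ p ∈ hilbert N (n1-1) :: l, Free N (hilbert N n1) (hilbert N (n1+1)) p :=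
    chain_all_free l _ (hfree (n1-1) (by omega) (by omega) (by omega)) hl1
  apply tour_of_list N {n1, n1+1}
    (seg (hilbert N) 0 n1 ++ ((hilbert N (n1-1) :: l) ++ seg (hilbert N) (n1+2) (4^N - (n1+2))))
  · rw [List.head?_append_of_ne_nil _ (seg_ne_nil _ _ _ (by omega))]
    exact seg_head? _ 0 n1 (by omega)
  · rw [List.getLast?_append_of_ne_nil _ (by
      exact List.append_ne_nil_of_right_ne_nil _ (seg_ne_nil _ _ _ (by omega)))]
    rw [List.getLast?_append_of_ne_nil _ (seg_ne_nil _ _ _ (by omega))]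
    rw [seg_getLast? _ _ _ (by omega)]
    have : n1 + 2 + (4^N - (n1+2)) - 1 = 4^N - 1 := by omega
    rw [this]
  · intro p hp
    rcases List.mem_append.mp hp with h | h
    · obtain ⟨k, hk, rfl⟩ := (seg_mem _ 0 n1 p).mp h
      exact hconv _ (hfree (0+k) (by omega) (by omega) (by omega))
    rcases List.mem_append.mp h with h | h
    · exact hconv _ (hmid p h)
    · obtain ⟨k, hk, rfl⟩ := (seg_mem _ (n1+2) _ p).mp h
      exact hconv _ (hfree (n1+2+k) (by omega) (by omega) (by omega))
  · have e2 : (hilbert N (n1-1) :: l).getLast? = some (hilbert N (n1+2)) := by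
      rw [List.getLast?_eq_getLast_of_ne_nil (List.cons_ne_nil _ _)]
      rw [hl2]
    have e3 : (seg (hilbert N) (n1+2) (4^N - (n1+2))).head? = some (hilbert N (n1+2)) :=
      seg_head? _ _ _ (by omega)
    have e1 : (seg (hilbert N) 0 n1).getLast? = some (hilbert N (n1-1)) := by
      rw [seg_getLast? _ _ _ (by omega)]
      have : 0 + n1 - 1 = n1 - 1 := by omega
      rw [this]
    refine List.IsChain.append ?_ (List.IsChain.append ?_ ?_ ?_) ?_
    · exact seg_chain' (hilbert N) 0 n1 (fun k hk => Or.inr (hilbert_adj N (0+k) (by omega)))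
    · exact List.IsChain.imp (fun a b s => Or.inr s.2.2) hl1
    · exact seg_chain' (hilbert N) (n1+2) _ (fun k hk => Or.inr (hilbert_adj N (n1+2+k) (by omega)))
    · intro x hx y hy
      rw [e2] at hx
      rw [e3] at hy
      simp only [Option.mem_def, Option.some.injEq] at hx hy
      subst hx; subst hy
      exact Or.inl rfl
    · intro x hx y hy
      rw [e1] at hx
      rw [List.head?_append_of_ne_nil _ (List.cons_ne_nil _ _)] at hy
      simp only [List.head?_cons, Option.mem_def, Option.some.injEq] at hx hy
      subst hx; subst hy
      exact Or.inl rfl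
  · intro p hp hpb
    obtain ⟨i, hiK, rfl⟩ := hilbert_surj N p hp
    have hi1 : i ≠ n1 := fun e => (hpb n1 (by simp)) (by rw [e])
    have hi2 : i ≠ n1+1 := fun e => (hpb (n1+1) (by simp)) (by rw [e])
    rcases Nat.lt_or_ge i n1 with h | h
    · exact List.mem_append.mpr (Or.inl ((seg_mem _ 0 n1 _).mpr ⟨i, h, by simp⟩))
    · have h' : n1 + 2 ≤ i := by omega
      refine List.mem_append.mpr (Or.inr (List.mem_append.mpr (Or.inr
        ((seg_mem _ (n1+2) _ _).mpr ⟨i - (n1+2), by omega, ?_⟩))))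
      congr 1
      omega
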